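/- Define f : ℝ² → ℝ² by f(x₁,x₂) = ((-x₁ - x₂)(1 + x₁²)², x₁ - x₂) and V(x₁,x₂) = x₁²/(1 + x₁²) + x₂². Then V and f satisfy the hypotheses of the paper's global-stability lemma: V(0)=0, V(x)>0 for x≠0, ∇V(x)·f(x) = -2‖x‖² < 0 for x≠0, and for any r > 0, ∇V(x)·f(x) ≤ -2r² for all ‖x‖ ≥ r. -/

import Mathlib

lemma normsq_two (x : EuclideanSpace ℝ (Fin 2)) : ‖x‖ ^ 2 = (x 0) ^ 2 + (x 1) ^ 2 := by
  rw [EuclideanSpace.norm_eq, Real.sq_sqrt (by positivity)]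
  simp [Fin.sum_univ_two, sq_abs]

/-- The example satisfies all hypotheses of the global-stability lemma. -/
theorem stmt_6
    (f : EuclideanSpace ℝ (Fin 2) → EuclideanSpace ℝ (Fin 2))
    (hf : ∀ x, f x = ![(-(x 0) - x 1) * (1 + (x 0) ^ 2) ^ 2, x 0 - x 1])
    (V : EuclideanSpace ℝ (Fin 2) → ℝ)
    (hV : ∀ x, V x = (x 0) ^ 2 / (1 + (x 0) ^ 2) + (x 1) ^ 2) :
    V 0 = 0 ∧ (∀ x, x ≠ 0 → 0 < V x) ∧
    (∀ x, fderiv ℝ V x (f x) = -2 * ‖x‖ ^ 2) ∧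
    (∀ x, x ≠ 0 → fderiv ℝ V x (f x) < 0) ∧
    (∀ r : ℝ, 0 < r → ∀ x, r ≤ ‖x‖ → fderiv ℝ V x (f x) ≤ -2 * r ^ 2) := by
  have key : ∀ x : EuclideanSpace ℝ (Fin 2), fderiv ℝ V x (f x) = -2 * ‖x‖ ^ 2 := by
    intro x
    have hden : (1 : ℝ) + (x 0) ^ 2 ≠ 0 := by positivity
    have h0 : HasFDerivAt (𝕜 := ℝ)
        (fun y : EuclideanSpace ℝ (Fin 2) => EuclideanSpace.proj (0 : Fin 2) y)
        (EuclideanSpace.proj (0 : Fin 2)) x := by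
      exact ContinuousLinearMap.hasFDerivAt _
    have h1 : HasFDerivAt (𝕜 := ℝ)
        (fun y : EuclideanSpace ℝ (Fin 2) => EuclideanSpace.proj (1 : Fin 2) y)
        (EuclideanSpace.proj (1 : Fin 2)) x := by
      exact ContinuousLinearMap.hasFDerivAt _
    have hg : HasDerivAt (fun t : ℝ => t ^ 2 / (1 + t ^ 2))
        ((2 * x 0 ^ 1 * (1 + x 0 ^ 2) - x 0 ^ 2 * (2 * x 0 ^ 1)) / (1 + x 0 ^ 2) ^ 2)
        (x 0) :=
      (hasDerivAt_pow 2 (x 0)).div ((hasDerivAt_pow 2 (x 0)).const_add 1) hden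
    have hq := hg.comp_hasFDerivAt x h0
    have hsq := (hasDerivAt_pow 2 (x 1)).comp_hasFDerivAt x h1
    have hVder := hq.add hsq
    have hVeq : V = fun y : EuclideanSpace ℝ (Fin 2) =>
        ((fun t : ℝ => t ^ 2 / (1 + t ^ 2)) ∘
          fun y : EuclideanSpace ℝ (Fin 2) => EuclideanSpace.proj (0 : Fin 2) y) y +
        ((fun t : ℝ => t ^ 2) ∘
          fun y : EuclideanSpace ℝ (Fin 2) => EuclideanSpace.proj (1 : Fin 2) y) y := by
      funext y
      simp [hV y, Function.comp]
    rw [hVeq, ← Pi.add_def, hVder.fderiv]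
    simp only [ContinuousLinearMap.add_apply, ContinuousLinearMap.coe_smul',
      Pi.smul_apply, PiLp.proj_apply, smul_eq_mul, hf x, normsq_two]
    simp only [Matrix.cons_val_zero, Matrix.cons_val_one, Matrix.head_cons]
    field_simp
    ring
  refine ⟨by simp [hV], ?_, key, ?_, ?_⟩
  · intro x hx
    rw [hV]
    have h01 : x 0 ≠ 0 ∨ x 1 ≠ 0 := by
      by_contra h
      push_neg at h
      apply hx
      ext i
      fin_cases i <;> simp [h.1, h.2]
    have hpos : (0:ℝ) < 1 + (x 0) ^ 2 := by positivity
    rcases h01 with h | h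
    · have h1 : 0 < (x 0) ^ 2 / (1 + (x 0) ^ 2) := by positivity
      nlinarith [sq_nonneg (x 1)]
    · have h1 : 0 < (x 1) ^ 2 := by positivity
      have h2 : 0 ≤ (x 0) ^ 2 / (1 + (x 0) ^ 2) := by positivity
      linarith
  · intro x hx
    rw [key x]
    have : 0 < ‖x‖ := norm_pos_iff.mpr hx
    nlinarith
  · intro r hr x hx
    rw [key x]
    nlinarith [norm_nonneg x]
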